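/- Let p ≥ 1, m ≥ 1 be natural numbers, let J ⊆ ℝ^p be an open connected set, let s₀ ∈ J, and for each α ∈ {1,…,p} let Z_α : J → M_m(ℝ) be a continuous matrix-valued function. If Y₁, Y₂ : J → M_m(ℝ) are C¹ functions satisfying ∂Y_i/∂s^α(s) = Z_α(s)·Y_i(s) for every s ∈ J and every α ∈ {1,…,p} (i = 1, 2), and if Y₁(s₀) = Y₂(s₀), then Y₁(s) = Y₂(s) for all s ∈ J. -/

import Mathlib

/-- Product of square `m × m` real matrices represented as plain functions
`Fin m → Fin m → ℝ`. -/
def matMul {m : ℕ} (X Y : Fin m → Fin m → ℝ) : Fin m → Fin m → ℝ :=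
  fun i j => ∑ k, X i k * Y k j

lemma matMul_sub {m : ℕ} (A X Y : Fin m → Fin m → ℝ) :
    matMul A (X - Y) = matMul A X - matMul A Y := by
  funext i j
  simp [matMul, mul_sub, Finset.sum_sub_distrib]

lemma matMul_sum_smul {m : ℕ} {ι : Type*} (s : Finset ι) (c : ι → ℝ)
    (A : ι → Fin m → Fin m → ℝ) (Y : Fin m → Fin m → ℝ) :
    matMul (∑ α ∈ s, c α • A α) Y = ∑ α ∈ s, c α • matMul (A α) Y := by
  funext i j
  simp only [matMul, Finset.sum_apply, Pi.smul_apply, smul_eq_mul, Finset.sum_mul,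
    Finset.mul_sum]
  rw [Finset.sum_comm]
  congr 1; funext k; congr 1; funext α; ring

lemma norm_matMul_le {m : ℕ} (A X : Fin m → Fin m → ℝ) :
    ‖matMul A X‖ ≤ (m * ‖A‖) * ‖X‖ := by
  have hnn : (0:ℝ) ≤ (m * ‖A‖) * ‖X‖ := by positivity
  rw [pi_norm_le_iff_of_nonneg hnn]
  intro i
  rw [pi_norm_le_iff_of_nonneg hnn]
  intro j
  have habs : ∀ k : Fin m, |A i k * X k j| ≤ ‖A‖ * ‖X‖ := by
    intro k
    rw [abs_mul]
    have h1 : |A i k| ≤ ‖A‖ := le_trans (norm_le_pi_norm (A i) k) (norm_le_pi_norm A i)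
    have h2 : |X k j| ≤ ‖X‖ := le_trans (norm_le_pi_norm (X k) j) (norm_le_pi_norm X k)
    exact mul_le_mul h1 h2 (abs_nonneg _) (norm_nonneg _)
  calc ‖matMul A X i j‖ = |∑ k, A i k * X k j| := rfl
    _ ≤ ∑ k : Fin m, |A i k * X k j| := Finset.abs_sum_le_sum_abs _ _
    _ ≤ ∑ _k : Fin m, ‖A‖ * ‖X‖ := Finset.sum_le_sum fun k _ => habs k
    _ = m * ‖A‖ * ‖X‖ := by simp [Finset.sum_const, mul_assoc]

lemma pi_eq_sum_single {p : ℕ} (c : Fin p → ℝ) :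
    c = ∑ α, c α • (Pi.single α 1 : Fin p → ℝ) := by
  funext j
  simp [Finset.sum_apply, Pi.single_apply]

/-- Key local step: on a ball contained in `J` around a point where two solutions agree,
they agree everywhere, via Grönwall along segments. -/
lemma solution_eq_on_ball {p m : ℕ}
    (J : Set (Fin p → ℝ)) (hJ : IsOpen J)
    (Z : Fin p → (Fin p → ℝ) → (Fin m → Fin m → ℝ))
    (hZ : ∀ α, ContinuousOn (Z α) J)
    (Y₁ Y₂ : (Fin p → ℝ) → (Fin m → Fin m → ℝ))
    (hY₁ : ContDiffOn ℝ 1 Y₁ J) (hY₂ : ContDiffOn ℝ 1 Y₂ J)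
    (hY₁eq : ∀ s ∈ J, ∀ α, fderiv ℝ Y₁ s (Pi.single α 1) = matMul (Z α s) (Y₁ s))
    (hY₂eq : ∀ s ∈ J, ∀ α, fderiv ℝ Y₂ s (Pi.single α 1) = matMul (Z α s) (Y₂ s))
    (s₁ : Fin p → ℝ) (hs₁ : s₁ ∈ J) (heq : Y₁ s₁ = Y₂ s₁)
    (ε : ℝ) (hball : Metric.ball s₁ ε ⊆ J)
    (s : Fin p → ℝ) (hs : s ∈ Metric.ball s₁ ε) :
    Y₁ s = Y₂ s := by
  set c : Fin p → ℝ := s - s₁ with hc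
  set γ : ℝ → (Fin p → ℝ) := fun t => s₁ + t • c with hγ
  have hγ0 : γ 0 = s₁ := by simp [hγ]
  have hγ1 : γ 1 = s := by simp [hγ, hc]
  have hγmem : ∀ t ∈ Set.Icc (0:ℝ) 1, γ t ∈ Metric.ball s₁ ε := by
    intro t ht
    have hcd : dist s s₁ < ε := Metric.mem_ball.mp hs
    rw [Metric.mem_ball]
    have : dist (γ t) s₁ = |t| * ‖c‖ := by
      rw [dist_eq_norm]
      simp [hγ, norm_smul, Real.norm_eq_abs]
    rw [this]
    have h1 : |t| ≤ 1 := by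
      rw [abs_le]; constructor <;> linarith [ht.1, ht.2]
    have hc' : ‖c‖ < ε := by rw [hc, ← dist_eq_norm]; exact hcd
    have hεpos : 0 < ε := lt_of_le_of_lt (norm_nonneg _) hc'
    calc |t| * ‖c‖ ≤ 1 * ‖c‖ := mul_le_mul_of_nonneg_right h1 (norm_nonneg _)
      _ = ‖c‖ := one_mul _
      _ < ε := hc'
  have hγJ : ∀ t ∈ Set.Icc (0:ℝ) 1, γ t ∈ J := fun t ht => hball (hγmem t ht)
  have hγ' : ∀ t : ℝ, HasDerivAt γ c t := by
    intro t
    have : HasDerivAt (fun t : ℝ => t • c) ((1:ℝ) • c) t := (hasDerivAt_id t).smul_const c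
    simpa [hγ] using this.const_add s₁
  -- matrix A t
  set A : ℝ → (Fin m → Fin m → ℝ) := fun t => ∑ α, c α • Z α (γ t) with hA
  have hγcont : Continuous γ := by
    apply continuous_const.add
    exact (continuous_id.smul continuous_const)
  have hAcont : ContinuousOn A (Set.Icc (0:ℝ) 1) := by
    apply continuousOn_finset_sum
    intro α _
    exact (((hZ α).comp hγcont.continuousOn hγJ)).const_smul (c α)
  -- derivative of Y ∘ γ
  have key : ∀ (Y : (Fin p → ℝ) → (Fin m → Fin m → ℝ)),
      ContDiffOn ℝ 1 Y J →
      (∀ s ∈ J, ∀ α, fderiv ℝ Y s (Pi.single α 1) = matMul (Z α s) (Y s)) →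
      ∀ t ∈ Set.Icc (0:ℝ) 1, HasDerivAt (fun u => Y (γ u)) (matMul (A t) (Y (γ t))) t := by
    intro Y hY hYeq t ht
    have hmem : γ t ∈ J := hγJ t ht
    have hdiff : DifferentiableAt ℝ Y (γ t) :=
      (hY.differentiableOn one_ne_zero).differentiableAt (hJ.mem_nhds hmem)
    have hD : HasDerivAt (fun u => Y (γ u)) (fderiv ℝ Y (γ t) c) t :=
      hdiff.hasFDerivAt.comp_hasDerivAt t (hγ' t)
    have hfc : fderiv ℝ Y (γ t) c = matMul (A t) (Y (γ t)) := by
      conv_lhs => rw [pi_eq_sum_single c]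
      rw [map_sum]
      have : ∀ α : Fin p, (fderiv ℝ Y (γ t)) (c α • (Pi.single α 1 : Fin p → ℝ))
          = c α • matMul (Z α (γ t)) (Y (γ t)) := by
        intro α
        rw [map_smul, hYeq (γ t) hmem α]
      rw [Finset.sum_congr rfl fun α _ => this α, hA, matMul_sum_smul]
    rwa [hfc] at hD
  -- the difference
  set w : ℝ → (Fin m → Fin m → ℝ) := fun t => Y₁ (γ t) - Y₂ (γ t) with hw
  have hw' : ∀ t ∈ Set.Icc (0:ℝ) 1, HasDerivAt w (matMul (A t) (w t)) t := by
    intro t ht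
    have := (key Y₁ hY₁ hY₁eq t ht).sub (key Y₂ hY₂ hY₂eq t ht)
    rw [← matMul_sub] at this; exact this
  have hwcont : ContinuousOn w (Set.Icc (0:ℝ) 1) :=
    fun t ht => ((hw' t ht).continuousAt).continuousWithinAt
  -- bound on A
  obtain ⟨C, hC⟩ := (isCompact_Icc).exists_bound_of_continuousOn hAcont
  set K : ℝ := m * max C 0 with hK
  have hbound : ∀ t ∈ Set.Ico (0:ℝ) 1, ‖matMul (A t) (w t)‖ ≤ K * ‖w t‖ + 0 := by
    intro t ht
    have ht' : t ∈ Set.Icc (0:ℝ) 1 := Set.Ico_subset_Icc_self ht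
    have h1 : ‖matMul (A t) (w t)‖ ≤ (m * ‖A t‖) * ‖w t‖ := norm_matMul_le _ _
    have h2 : ‖A t‖ ≤ max C 0 := le_trans (hC t ht') (le_max_left _ _)
    have h3 : (m : ℝ) * ‖A t‖ * ‖w t‖ ≤ K * ‖w t‖ := by
      apply mul_le_mul_of_nonneg_right _ (norm_nonneg _)
      exact mul_le_mul_of_nonneg_left h2 (Nat.cast_nonneg m)
    linarith
  have hw0 : ‖w 0‖ ≤ 0 := by
    simp [hw, hγ0, heq]
  have := norm_le_gronwallBound_of_norm_deriv_right_le hwcont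
    (fun t ht => (hw' t (Set.Ico_subset_Icc_self ht)).hasDerivWithinAt) hw0 hbound
    1 ⟨zero_le_one, le_rfl⟩
  rw [gronwallBound_ε0_δ0] at this
  have hw1 : w 1 = 0 := norm_le_zero_iff.mp this
  have : Y₁ (γ 1) = Y₂ (γ 1) := by
    have := sub_eq_zero.mp hw1
    exact this
  rwa [hγ1] at this

/-- Two `C¹` solutions of `∂Y/∂s^α = Z_α Y` on an open connected set `J` that
agree at one point `s₀ ∈ J` agree on all of `J`. -/
theorem solution_unique {p m : ℕ} (hp : 1 ≤ p) (hm : 1 ≤ m)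
    (J : Set (Fin p → ℝ)) (hJ : IsOpen J) (hJconn : IsConnected J)
    (s₀ : Fin p → ℝ) (hs₀ : s₀ ∈ J)
    (Z : Fin p → (Fin p → ℝ) → (Fin m → Fin m → ℝ))
    (hZ : ∀ α, ContinuousOn (Z α) J)
    (Y₁ Y₂ : (Fin p → ℝ) → (Fin m → Fin m → ℝ))
    (hY₁ : ContDiffOn ℝ 1 Y₁ J) (hY₂ : ContDiffOn ℝ 1 Y₂ J)
    (hY₁eq : ∀ s ∈ J, ∀ α, fderiv ℝ Y₁ s (Pi.single α 1) = matMul (Z α s) (Y₁ s))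
    (hY₂eq : ∀ s ∈ J, ∀ α, fderiv ℝ Y₂ s (Pi.single α 1) = matMul (Z α s) (Y₂ s))
    (h₀ : Y₁ s₀ = Y₂ s₀) :
    ∀ s ∈ J, Y₁ s = Y₂ s := by
  haveI : ConnectedSpace J := Subtype.connectedSpace hJconn
  set S : Set J := {x : J | Y₁ x.val = Y₂ x.val} with hS
  have hSopen : IsOpen S := by
    rw [isOpen_iff_mem_nhds]
    rintro ⟨x, hxJ⟩ hxS
    obtain ⟨ε, hε, hball⟩ := Metric.isOpen_iff.mp hJ x hxJ
    have hsub : (Subtype.val : J → (Fin p → ℝ)) ⁻¹' (Metric.ball x ε) ⊆ S := by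
      rintro ⟨y, hyJ⟩ hy
      exact solution_eq_on_ball J hJ Z hZ Y₁ Y₂ hY₁ hY₂ hY₁eq hY₂eq x hxJ hxS ε hball y hy
    exact Filter.mem_of_superset
      (continuous_subtype_val.continuousAt.preimage_mem_nhds (Metric.ball_mem_nhds x hε)) hsub
  have hSclosed : IsClosed S := by
    have h1 : Continuous (fun x : J => Y₁ x.val) := hY₁.continuousOn.restrict
    have h2 : Continuous (fun x : J => Y₂ x.val) := hY₂.continuousOn.restrict
    exact isClosed_eq h1 h2
  have hSne : S.Nonempty := ⟨⟨s₀, hs₀⟩, h₀⟩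
  have : S = Set.univ := IsClopen.eq_univ ⟨hSclosed, hSopen⟩ hSne
  intro s hs
  have : (⟨s, hs⟩ : J) ∈ S := this ▸ Set.mem_univ _
  exact this
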